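/- Let n ≥ 2 and let G be the cyclically presented group G_n(m,k) with m ≡ 0 (mod n), i.e. G = ⟨x_0,…,x_{n−1} ∣ x_i·x_i = x_{i+k} (indices mod n)⟩ with gcd(n,k) = 1. Then G is cyclic of order 2^n − 1. -/
import Mathlib


/-- Relators of the cyclically presented group
`G_n(0,k) = ⟨x_0,…,x_{n−1} ∣ x_i x_i = x_{i+k}⟩` (indices mod n). -/
def cycRels (n k : ℕ) : Set (FreeGroup (ZMod n)) :=
  {r | ∃ i : ZMod n, r = FreeGroup.of i * FreeGroup.of i * (FreeGroup.of (i + (k : ZMod n)))⁻¹}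

/-- The cyclically presented group G_n(0,k) with relations x_i² = x_{i+k}. -/
def cycGroup (n k : ℕ) : Type := PresentedGroup (cycRels n k)

instance (n k : ℕ) : Group (cycGroup n k) := by unfold cycGroup; infer_instance

section Aux
variable (n k : ℕ)

lemma aux_two_pow_n (hn : 2 ≤ n) : (2 : ZMod (2^n - 1))^n = 1 := by
  have h1 : (2^n : ℕ) = (2^n - 1) + 1 := by
    have := Nat.one_le_two_pow (n := n); omega
  have : ((2^n : ℕ) : ZMod (2^n - 1)) = 1 := by
    rw [h1]; push_cast [ZMod.natCast_self]; ring
  simpa using this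

lemma aux_two_pow_mod (hn : 2 ≤ n) (a : ℕ) :
    (2 : ZMod (2^n - 1))^a = 2^(a % n) := by
  conv_lhs => rw [← Nat.div_add_mod a n, pow_add, pow_mul, aux_two_pow_n n hn, one_pow, one_mul]

end Aux

theorem stmt19 (n k : ℕ) (hn : 2 ≤ n) (hnk : Nat.gcd n k = 1) :
    IsCyclic (cycGroup n k) ∧ Nat.card (cycGroup n k) = 2 ^ n - 1 := by
  haveI : NeZero n := ⟨by omega⟩
  have h2n : 1 ≤ 2^n := Nat.one_le_two_pow
  set m := 2^n - 1 with hm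
  haveI : NeZero m := ⟨by
    have : 2^2 ≤ 2^n := Nat.pow_le_pow_right (by norm_num) hn
    omega⟩
  haveI : Fact (1 < n) := ⟨by omega⟩
  have hk : (k : ZMod n) * (k : ZMod n)⁻¹ = 1 :=
    ZMod.coe_mul_inv_eq_one k (Nat.coprime_comm.mp hnk)
  -- the target map
  set b : ZMod n → ℕ := fun i => (i * (k : ZMod n)⁻¹).val with hb
  set f : ZMod n → Multiplicative (ZMod m) :=
    fun i => Multiplicative.ofAdd ((2 : ZMod m) ^ b i) with hf
  have hrels : ∀ r ∈ cycRels n k, FreeGroup.lift f r = 1 := by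
    rintro r ⟨i, rfl⟩
    have hbk : b (i + (k : ZMod n)) = (b i + 1) % n := by
      rw [hb]
      simp only [add_mul, hk]
      rw [ZMod.val_add, ZMod.val_one]
    simp only [map_mul, map_inv, FreeGroup.lift_apply_of, hf]
    rw [mul_inv_eq_one, ← ofAdd_add]
    congr 1
    rw [hbk, ← aux_two_pow_mod n hn (b i + 1), pow_succ]
    ring
  let φ : PresentedGroup (cycRels n k) →* Multiplicative (ZMod m) :=
    PresentedGroup.toGroup hrels
  set g : PresentedGroup (cycRels n k) := PresentedGroup.of (0 : ZMod n) with hg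
  -- relations in the group
  have hsq : ∀ i : ZMod n,
      (PresentedGroup.of i : PresentedGroup (cycRels n k)) * PresentedGroup.of i
        = PresentedGroup.of (i + (k : ZMod n)) := by
    intro i
    have h1 : (PresentedGroup.mk (cycRels n k))
        (FreeGroup.of i * FreeGroup.of i * (FreeGroup.of (i + (k : ZMod n)))⁻¹) = 1 := by
      apply (QuotientGroup.eq_one_iff _).mpr
      exact Subgroup.subset_normalClosure ⟨i, rfl⟩
    rw [map_mul, map_mul, map_inv, mul_inv_eq_one] at h1
    exact h1
  have hpow : ∀ j : ℕ,
      (PresentedGroup.of (((j * k : ℕ) : ZMod n)) : PresentedGroup (cycRels n k)) = g ^ (2^j) := by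
    intro j
    induction j with
    | zero => simp [hg]
    | succ j ih =>
      have : (((j+1) * k : ℕ) : ZMod n) = ((j * k : ℕ) : ZMod n) + (k : ZMod n) := by
        push_cast; ring
      rw [this, ← hsq, ih, ← pow_add]
      congr 1
      omega
  have hgen : ∀ i : ZMod n,
      (PresentedGroup.of i : PresentedGroup (cycRels n k)) = g ^ (2 ^ b i) := by
    intro i
    have : ((b i * k : ℕ) : ZMod n) = i := by
      push_cast
      rw [hb]
      simp only [ZMod.natCast_val, ZMod.cast_id]
      rw [mul_assoc, mul_comm ((k:ZMod n))⁻¹ (k:ZMod n), hk, mul_one]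
    conv_lhs => rw [← this]
    rw [hpow]
  -- g has order dividing m
  have hgm : g ^ m = 1 := by
    have h0 : ((n * k : ℕ) : ZMod n) = 0 := by push_cast; simp
    have := hpow n
    rw [h0, ← hg] at this
    -- g = g ^ 2^n
    have h2 : g ^ (2^n) = g ^ m * g := by
      rw [← pow_succ]
      congr 1
      omega
    rw [h2] at this
    have := mul_right_cancel (a := g ^ m) (b := g) (c := 1) (by rw [one_mul, ← this])
    exact this
  -- every element is a power of g
  have hzpow : ∀ x : PresentedGroup (cycRels n k), x ∈ Subgroup.zpowers g := by
    intro x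
    apply PresentedGroup.generated_by
    intro j
    rw [hgen j]
    exact Subgroup.pow_mem _ (Subgroup.mem_zpowers g) _
  have hφg : φ g = Multiplicative.ofAdd (1 : ZMod m) := by
    rw [hg]
    show φ (PresentedGroup.of 0) = _
    rw [PresentedGroup.toGroup.of]
    simp [hf, hb]
  have hφ_pow : ∀ t : ℤ, φ (g ^ t) = Multiplicative.ofAdd ((t : ZMod m)) := by
    intro t
    rw [map_zpow, hφg, ← ofAdd_zsmul]
    congr 1
    simp [zsmul_eq_mul]
  have hinj : Function.Injective φ := by
    rw [injective_iff_map_eq_one]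
    intro x hx
    obtain ⟨t, rfl⟩ := hzpow x
    rw [hφ_pow] at hx
    have : (t : ZMod m) = 0 := by
      have := ofAdd_eq_one.mp hx
      exact this
    obtain ⟨s, rfl⟩ := (ZMod.intCast_zmod_eq_zero_iff_dvd t m).mp this
    show g ^ ((m : ℤ) * s) = 1
    rw [zpow_mul, zpow_natCast, hgm, one_zpow]
  have hsurj : Function.Surjective φ := by
    intro y
    refine ⟨g ^ ((y.toAdd).val : ℤ), ?_⟩
    rw [hφ_pow]
    simp [ZMod.natCast_val, ZMod.cast_id]
  have e : PresentedGroup (cycRels n k) ≃* Multiplicative (ZMod m) :=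
    MulEquiv.ofBijective φ ⟨hinj, hsurj⟩
  have hcyc : IsCyclic (PresentedGroup (cycRels n k)) := ⟨⟨g, hzpow⟩⟩
  have hcard : Nat.card (PresentedGroup (cycRels n k)) = m := by
    rw [Nat.card_congr e.toEquiv]
    simp [Nat.card_zmod]
  exact ⟨hcyc, hcard⟩
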